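/- Fix q_1, …, q_N, v_1, …, v_N, do_1, …, do_N ∈ ℝ^d and fix an index j. For K = (k_1, …, k_N) with k_l ∈ ℝ^d, define L_i(K) := Σ_{l=1}^N e^{q_i^⊤ k_l}, P_{il}(K) := e^{q_i^⊤ k_l} / L_i(K), o_i(K) := Σ_{l=1}^N P_{il}(K) v_l, and φ(K) := Σ_{i=1}^N do_i^⊤ o_i(K). Then φ is differentiable in k_j and its gradient with respect to k_j is ∇_{k_j} φ = Σ_{i=1}^N P_{ij}(K) ( do_i^⊤ v_j − D_i(K) ) q_i, where D_i(K) := do_i^⊤ o_i(K). (Equation (8): the memory-efficient formula for the key gradient dk_j.) -/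

import Mathlib

/-- `L_i(K) := Σ_l e^{q_iᵀ k_l}`. -/
noncomputable def LiK {N d : ℕ} (q : Fin N → Fin d → ℝ) (i : Fin N)
    (K : Fin N → Fin d → ℝ) : ℝ :=
  ∑ l, Real.exp (∑ s, q i s * K l s)

/-- `P_{il}(K) := e^{q_iᵀ k_l} / L_i(K)`. -/
noncomputable def PiK {N d : ℕ} (q : Fin N → Fin d → ℝ) (i l : Fin N)
    (K : Fin N → Fin d → ℝ) : ℝ :=
  Real.exp (∑ s, q i s * K l s) / LiK q i K

/-- `o_i(K) := Σ_l P_{il}(K) v_l`. -/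
noncomputable def oiK {N d : ℕ} (q v : Fin N → Fin d → ℝ) (i : Fin N)
    (K : Fin N → Fin d → ℝ) : Fin d → ℝ :=
  fun r => ∑ l, PiK q i l K * v l r

/-- `D_i(K) := do_iᵀ o_i(K)`. -/
noncomputable def DiK {N d : ℕ} (q v dO : Fin N → Fin d → ℝ) (i : Fin N)
    (K : Fin N → Fin d → ℝ) : ℝ :=
  ∑ r, dO i r * oiK q v i K r

/-- `φ(K) := Σ_i do_iᵀ o_i(K)`. -/
noncomputable def phiK {N d : ℕ} (q v dO : Fin N → Fin d → ℝ)
    (K : Fin N → Fin d → ℝ) : ℝ :=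
  ∑ i, DiK q v dO i K



variable {N d : ℕ}

noncomputable def gA (q K : Fin N → Fin d → ℝ) (j i l : Fin N) (kj : Fin d → ℝ) : ℝ :=
  ∑ s, q i s * Function.update K j kj l s

noncomputable def denA (q K : Fin N → Fin d → ℝ) (j i : Fin N) (kj : Fin d → ℝ) : ℝ :=
  ∑ l, Real.exp (gA q K j i l kj)

noncomputable def wA (v dO : Fin N → Fin d → ℝ) (i l : Fin N) : ℝ := ∑ r, dO i r * v l r

noncomputable def numA (q v dO K : Fin N → Fin d → ℝ) (j i : Fin N) (kj : Fin d → ℝ) : ℝ :=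
  ∑ l, Real.exp (gA q K j i l kj) * wA v dO i l

noncomputable def FA (q v dO K : Fin N → Fin d → ℝ) (j i : Fin N) (kj : Fin d → ℝ) : ℝ :=
  numA q v dO K j i kj * (denA q K j i kj)⁻¹

noncomputable def LqA (q : Fin N → Fin d → ℝ) (i : Fin N) : (Fin d → ℝ) →L[ℝ] ℝ :=
  ∑ s, q i s • (ContinuousLinearMap.proj s : (Fin d → ℝ) →L[ℝ] ℝ)

lemma LqA_apply (q : Fin N → Fin d → ℝ) (i : Fin N) (h : Fin d → ℝ) :
    LqA q i h = ∑ s, q i s * h s := by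
  simp [LqA]

lemma gA_self (q K : Fin N → Fin d → ℝ) (j i l : Fin N) :
    gA q K j i l (K j) = ∑ s, q i s * K l s := by
  simp [gA, Function.update_eq_self]

lemma denA_pos (q K : Fin N → Fin d → ℝ) (j i : Fin N) (kj : Fin d → ℝ) :
    0 < denA q K j i kj :=
  Finset.sum_pos (fun l _ => Real.exp_pos _) ⟨j, Finset.mem_univ j⟩

lemma hasFDerivAt_gA (q K : Fin N → Fin d → ℝ) (j i l : Fin N) (x : Fin d → ℝ) :
    HasFDerivAt (gA q K j i l) (if l = j then LqA q i else 0) x := by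
  by_cases hl : l = j
  · rw [if_pos hl]
    have hfun : gA q K j i l = fun kj : Fin d → ℝ => ∑ s, q i s * kj s := by
      funext k; simp [gA, hl]
    rw [hfun]
    exact HasFDerivAt.fun_sum fun s _ =>
      ((ContinuousLinearMap.proj s : (Fin d → ℝ) →L[ℝ] ℝ).hasFDerivAt).const_mul (q i s)
  · rw [if_neg hl]
    have hfun : gA q K j i l = fun _ : Fin d → ℝ => ∑ s, q i s * K l s := by
      funext k; simp [gA, Function.update_of_ne hl]
    rw [hfun]
    exact hasFDerivAt_const _ _

lemma hasFDerivAt_denA (q K : Fin N → Fin d → ℝ) (j i : Fin N) (x : Fin d → ℝ) :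
    HasFDerivAt (denA q K j i) (Real.exp (gA q K j i j x) • LqA q i) x := by
  have h := HasFDerivAt.fun_sum (fun l (_ : l ∈ Finset.univ) =>
    (hasFDerivAt_gA q K j i l x).exp)
  have he : (∑ l, Real.exp (gA q K j i l x) • if l = j then LqA q i else 0)
      = Real.exp (gA q K j i j x) • LqA q i := by
    rw [Finset.sum_eq_single j]
    · simp
    · intro l _ hl; simp [hl]
    · simp
  rw [← he]
  exact h

lemma hasFDerivAt_numA (q v dO K : Fin N → Fin d → ℝ) (j i : Fin N) (x : Fin d → ℝ) :
    HasFDerivAt (numA q v dO K j i)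
      ((wA v dO i j * Real.exp (gA q K j i j x)) • LqA q i) x := by
  have h := HasFDerivAt.fun_sum (fun l (_ : l ∈ Finset.univ) =>
    ((hasFDerivAt_gA q K j i l x).exp).mul_const (wA v dO i l))
  have he : (∑ l, wA v dO i l • Real.exp (gA q K j i l x) • if l = j then LqA q i else 0)
      = (wA v dO i j * Real.exp (gA q K j i j x)) • LqA q i := by
    rw [Finset.sum_eq_single j]
    · simp [smul_smul]
    · intro l _ hl; simp [hl]
    · simp
  rw [← he]
  exact h

lemma hasFDerivAt_FA (q v dO K : Fin N → Fin d → ℝ) (j i : Fin N) (x : Fin d → ℝ) :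
    HasFDerivAt (FA q v dO K j i)
      (numA q v dO K j i x • ((-(denA q K j i x ^ 2)⁻¹) •
          (Real.exp (gA q K j i j x) • LqA q i)) +
        (denA q K j i x)⁻¹ •
          ((wA v dO i j * Real.exp (gA q K j i j x)) • LqA q i)) x := by
  have hinv : HasFDerivAt (fun kj => (denA q K j i kj)⁻¹)
      ((-(denA q K j i x ^ 2)⁻¹) • (Real.exp (gA q K j i j x) • LqA q i)) x :=
    (hasDerivAt_inv (denA_pos q K j i x).ne').comp_hasFDerivAt x (hasFDerivAt_denA q K j i x)
  exact (hasFDerivAt_numA q v dO K j i x).mul hinv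

lemma DiK_update (q v dO K : Fin N → Fin d → ℝ) (j i : Fin N) (kj : Fin d → ℝ) :
    DiK q v dO i (Function.update K j kj) = FA q v dO K j i kj := by
  unfold DiK oiK PiK LiK FA numA denA gA wA
  simp only [Finset.mul_sum, Finset.sum_mul]
  rw [Finset.sum_comm]
  refine Finset.sum_congr rfl fun l _ => ?_
  refine Finset.sum_congr rfl fun r _ => ?_
  rw [div_eq_mul_inv]
  ring



/-- **Equation (8): the memory-efficient formula for the key gradient `dk_j`.**
With `q_i, v_l, do_i ∈ ℝ^d` fixed and an index `j` fixed, `φ(K) = Σ_i do_iᵀ o_i(K)` is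
differentiable in `k_j`, and its gradient with respect to `k_j` is
`∇_{k_j} φ = Σ_i P_{ij}(K) (do_iᵀ v_j - D_i(K)) q_i`, i.e. the Fréchet derivative of
`k ↦ φ(K[k_j := k])` at `K j`, applied to a direction `h`, equals `(∇_{k_j} φ)ᵀ h`. -/
theorem key_gradient_formula {N d : ℕ} (q v dO : Fin N → Fin d → ℝ) (j : Fin N)
    (K : Fin N → Fin d → ℝ) :
    Differentiable ℝ (fun kj : Fin d → ℝ => phiK q v dO (Function.update K j kj)) ∧
    ∀ h : Fin d → ℝ,
      fderiv ℝ (fun kj : Fin d → ℝ => phiK q v dO (Function.update K j kj)) (K j) h =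
        ∑ s, (∑ i, PiK q i j K * ((∑ r, dO i r * v j r) - DiK q v dO i K) * q i s) * h s := by
  classical
  have hK : Function.update K j (K j) = K := Function.update_eq_self j K
  have hfun : (fun kj : Fin d → ℝ => phiK q v dO (Function.update K j kj))
      = fun kj => ∑ i, FA q v dO K j i kj := by
    funext kj
    unfold phiK
    exact Finset.sum_congr rfl fun i _ => DiK_update q v dO K j i kj
  have hder : ∀ x : Fin d → ℝ, HasFDerivAt (fun kj => ∑ i, FA q v dO K j i kj)
      (∑ i, (numA q v dO K j i x • ((-(denA q K j i x ^ 2)⁻¹) •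
          (Real.exp (gA q K j i j x) • LqA q i)) +
        (denA q K j i x)⁻¹ •
          ((wA v dO i j * Real.exp (gA q K j i j x)) • LqA q i))) x :=
    fun x => HasFDerivAt.fun_sum fun i _ => hasFDerivAt_FA q v dO K j i x
  rw [hfun]
  refine ⟨fun x => (hder x).differentiableAt, fun h => ?_⟩
  rw [(hder (K j)).fderiv]
  simp only [ContinuousLinearMap.sum_apply, ContinuousLinearMap.add_apply,
    ContinuousLinearMap.smul_apply, smul_eq_mul, LqA_apply]
  simp only [Finset.sum_mul]
  rw [Finset.sum_comm]
  refine Finset.sum_congr rfl fun i _ => ?_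
  have hden : denA q K j i (K j) = LiK q i K := by
    unfold denA LiK; exact Finset.sum_congr rfl fun l _ => by rw [gA_self]
  have hDi : DiK q v dO i K = FA q v dO K j i (K j) := by
    conv_lhs => rw [← hK]
    exact DiK_update q v dO K j i (K j)
  have hLpos := denA_pos q K j i (K j)
  have hP : PiK q i j K = Real.exp (gA q K j i j (K j)) * (denA q K j i (K j))⁻¹ := by
    unfold PiK; rw [gA_self, hden, div_eq_mul_inv]
  have hw : wA v dO i j = ∑ r, dO i r * v j r := rfl
  rw [hP, hDi]
  unfold FA
  rw [← hw]
  rw [show (∑ x, Real.exp (gA q K j i j (K j)) * (denA q K j i (K j))⁻¹ *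
        (wA v dO i j - numA q v dO K j i (K j) * (denA q K j i (K j))⁻¹) * q i x * h x)
      = Real.exp (gA q K j i j (K j)) * (denA q K j i (K j))⁻¹ *
        (wA v dO i j - numA q v dO K j i (K j) * (denA q K j i (K j))⁻¹) *
        ∑ s, q i s * h s from by
    rw [Finset.mul_sum]; exact Finset.sum_congr rfl fun s _ => by ring]
  have hne : denA q K j i (K j) ≠ 0 := hLpos.ne'
  field_simp
  ring
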